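/- Let (λ, x) be an eigenpair of a symmetric m-th order tensor A and α > β(A). Then x is a fixed point of the map φ(y) = (A y^{m−1} + α y)/‖A y^{m−1} + α y‖, and the Jacobian of φ at x equals J = [(m−1)(A x^{m−2} − λ x xᵀ) + α(I − x xᵀ)]/(λ + α). -/

import Mathlib

noncomputable section
open scoped BigOperators
open Metric Filter
open scoped RealInnerProductSpace

abbrev En (n : ℕ) := EuclideanSpace ℝ (Fin n)

def Symm {m n : ℕ} (A : (Fin m → Fin n) → ℝ) : Prop :=
  ∀ (p : Equiv.Perm (Fin m)) (i : Fin m → Fin n), A (i ∘ p) = A i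

def tmul {m n : ℕ} (A : (Fin m → Fin n) → ℝ) (x : En n) : ℝ :=
  ∑ i : Fin m → Fin n, A i * ∏ k, x (i k)

def tvec {m n : ℕ} (A : (Fin (m+1) → Fin n) → ℝ) (x : En n) : En n :=
  WithLp.toLp 2 (fun j => ∑ i : Fin m → Fin n, A (Fin.cons j i) * ∏ k, x (i k))

def tmat {m n : ℕ} (A : (Fin (m+2) → Fin n) → ℝ) (x : En n) : Matrix (Fin n) (Fin n) ℝ :=
  fun j k => ∑ i : Fin m → Fin n, A (Fin.cons j (Fin.cons k i)) * ∏ l, x (i l)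

def quadForm {n : ℕ} (M : Matrix (Fin n) (Fin n) ℝ) (y : En n) : ℝ :=
  ∑ j, ∑ k, y j * M j k * y k

def srad {n : ℕ} (M : Matrix (Fin n) (Fin n) ℝ) : ℝ :=
  ⨆ y : sphere (0 : En n) 1, |quadForm M (y : En n)|

def beta {m n : ℕ} (A : (Fin (m+2) → Fin n) → ℝ) : ℝ :=
  ((m:ℝ)+1) * ⨆ x : sphere (0 : En n) 1, srad (tmat A (x : En n))

lemma sum_cons_decomp {m n : ℕ} (f : (Fin (m+1) → Fin n) → ℝ) :
    ∑ i : Fin (m+1) → Fin n, f i = ∑ c : Fin n, ∑ i : Fin m → Fin n, f (Fin.cons c i) := by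
  rw [← (Fin.consEquiv (fun _ => Fin n)).sum_comp f, Fintype.sum_prod_type]
  rfl

lemma prod_erase_zero {m : ℕ} (f : Fin (m+1) → ℝ) :
    ∏ l ∈ Finset.univ.erase 0, f l = ∏ l : Fin m, f l.succ := by
  rw [Fin.univ_succ, Finset.erase_cons, Finset.prod_map]
  rfl

def permCons {m : ℕ} (σ : Equiv.Perm (Fin (m+1))) : Equiv.Perm (Fin (m+2)) where
  toFun := Fin.cons 0 (fun l => (σ l).succ)
  invFun := Fin.cons 0 (fun l => (σ.symm l).succ)
  left_inv := by
    intro l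
    induction l using Fin.cases <;> simp
  right_inv := by
    intro l
    induction l using Fin.cases <;> simp

lemma symm_tail {m n : ℕ} {A : (Fin (m+2) → Fin n) → ℝ} (hA : Symm A) (j : Fin n)
    (σ : Equiv.Perm (Fin (m+1))) (i : Fin (m+1) → Fin n) :
    A (Fin.cons j (i ∘ σ)) = A (Fin.cons j i) := by
  have h := hA (permCons σ) (Fin.cons j i)
  rw [← h]
  congr 1
  funext l
  induction l using Fin.cases <;> simp [permCons]

lemma symm_swap01 {m n : ℕ} {A : (Fin (m+2) → Fin n) → ℝ} (hA : Symm A) (j k : Fin n)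
    (i : Fin m → Fin n) :
    A (Fin.cons j (Fin.cons k i)) = A (Fin.cons k (Fin.cons j i)) := by
  have h := hA (Equiv.swap 0 1) (Fin.cons k (Fin.cons j i))
  rw [← h]
  congr 1
  funext l
  induction l using Fin.cases with
  | zero => simp
  | succ l' =>
    induction l' using Fin.cases with
    | zero => simp [Equiv.swap_apply_right, Fin.cons_zero]
    | succ l'' =>
      simp only [Function.comp_apply]
      rw [Equiv.swap_apply_of_ne_of_ne (Fin.succ_ne_zero _) (by
        rw [← Fin.succ_zero_eq_one]
        exact fun h => Fin.succ_ne_zero _ (Fin.succ_injective _ h))]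
      simp

lemma sum_comp_perm {m n : ℕ} (σ : Equiv.Perm (Fin (m+1))) (F : (Fin (m+1) → Fin n) → ℝ) :
    ∑ i : Fin (m+1) → Fin n, F (i ∘ σ) = ∑ i, F i := by
  have := (Equiv.arrowCongr σ.symm (Equiv.refl (Fin n))).sum_comp F
  rw [← this]
  rfl

lemma prod_swap_erase {m : ℕ} (f : Fin (m+1) → ℝ) (k : Fin (m+1)) :
    ∏ l ∈ Finset.univ.erase k, f (Equiv.swap 0 k l) = ∏ l ∈ Finset.univ.erase 0, f l := by
  rw [← Finset.prod_image (fun a _ b _ h => (Equiv.swap 0 k).injective h)]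
  congr 1
  ext a
  simp only [Finset.mem_image, Finset.mem_erase, Finset.mem_univ, and_true]
  constructor
  · rintro ⟨b, hb, rfl⟩
    intro h0
    exact hb ((Equiv.swap 0 k).injective (h0.trans (Equiv.swap_apply_right 0 k).symm))
  · intro ha
    refine ⟨Equiv.swap 0 k a, fun h => ha ?_, by simp⟩
    have := congrArg (Equiv.swap 0 k) h
    simpa [Equiv.swap_apply_right] using this

lemma tvec_apply {m n : ℕ} (A : (Fin (m+2) → Fin n) → ℝ) (x : En n) (j : Fin n) :
    tvec A x j = ∑ c, tmat A x j c * x c := by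
  show ∑ i : Fin (m+1) → Fin n, A (Fin.cons j i) * ∏ k, x (i k) = _
  rw [sum_cons_decomp]
  refine Finset.sum_congr rfl fun c _ => ?_
  rw [tmat, Finset.sum_mul]
  refine Finset.sum_congr rfl fun i _ => ?_
  rw [Fin.prod_univ_succ]
  show A (Fin.cons j (Fin.cons c i)) * (x c * ∏ l : Fin m, x (i l)) = _
  ring

lemma vecMul_tmat {m n : ℕ} {A : (Fin (m+2) → Fin n) → ℝ} (hA : Symm A) (x : En n)
    (k : Fin n) : ∑ j, x j * tmat A x j k = tvec A x k := by
  show _ = ∑ i : Fin (m+1) → Fin n, A (Fin.cons k i) * ∏ l, x (i l)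
  rw [sum_cons_decomp (fun i => A (Fin.cons k i) * ∏ l, x (i l))]
  refine Finset.sum_congr rfl fun c _ => ?_
  rw [tmat, Finset.mul_sum]
  refine Finset.sum_congr rfl fun i _ => ?_
  rw [Fin.prod_univ_succ, symm_swap01 hA]
  show _ = A (Fin.cons k (Fin.cons c i)) * (x c * ∏ l : Fin m, x (i l))
  ring

lemma deriv_term {m n : ℕ} {A : (Fin (m+2) → Fin n) → ℝ} (hA : Symm A) (x v : En n)
    (j : Fin n) (k : Fin (m+1)) :
    ∑ i : Fin (m+1) → Fin n, A (Fin.cons j i) * ((∏ l ∈ Finset.univ.erase k, x (i l)) * v (i k))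
      = ∑ c, tmat A x j c * v c := by
  rw [← sum_comp_perm (Equiv.swap (0 : Fin (m+1)) k)]
  have hterm : ∀ i : Fin (m+1) → Fin n,
      A (Fin.cons j (i ∘ Equiv.swap (0 : Fin (m+1)) k)) *
        ((∏ l ∈ Finset.univ.erase k, x ((i ∘ Equiv.swap (0 : Fin (m+1)) k) l)) *
          v ((i ∘ Equiv.swap (0 : Fin (m+1)) k) k))
      = A (Fin.cons j i) * ((∏ l ∈ Finset.univ.erase 0, x (i l)) * v (i 0)) := by
    intro i
    rw [symm_tail hA]
    have h1 : ∏ l ∈ Finset.univ.erase k, x ((i ∘ Equiv.swap (0 : Fin (m+1)) k) l)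
        = ∏ l ∈ Finset.univ.erase 0, x (i l) :=
      prod_swap_erase (fun l => x (i l)) k
    have h2 : (i ∘ Equiv.swap (0 : Fin (m+1)) k) k = i 0 := by
      simp [Equiv.swap_apply_right]
    rw [h1, h2]
  rw [Finset.sum_congr rfl (fun i _ => hterm i),
    sum_cons_decomp (fun i => A (Fin.cons j i) * ((∏ l ∈ Finset.univ.erase 0, x (i l)) * v (i 0)))]
  refine Finset.sum_congr rfl fun c _ => ?_
  rw [tmat, Finset.sum_mul]
  refine Finset.sum_congr rfl fun i _ => ?_
  rw [prod_erase_zero]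
  show A (Fin.cons j (Fin.cons c i)) * ((∏ l : Fin m, x (i l)) * v c) = _
  ring

lemma abs_coord_le {n : ℕ} (y : En n) (hy : ‖y‖ = 1) (j : Fin n) : |y j| ≤ 1 := by
  have h1 : |y j| ≤ ‖y‖ := by
    rw [EuclideanSpace.norm_eq]
    rw [show |y j| = Real.sqrt (‖y j‖^2) by rw [Real.sqrt_sq_eq_abs]; simp]
    apply Real.sqrt_le_sqrt
    exact Finset.single_le_sum (f := fun i => ‖y i‖^2) (fun i _ => sq_nonneg _)
      (Finset.mem_univ j)
  rw [hy] at h1; exact h1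

lemma quad_bound {n : ℕ} (M : Matrix (Fin n) (Fin n) ℝ) (y : En n) (hy : ‖y‖ = 1) :
    |quadForm M y| ≤ ∑ j, ∑ k, |M j k| := by
  refine (Finset.abs_sum_le_sum_abs _ _).trans ?_
  refine Finset.sum_le_sum fun j _ => ?_
  refine (Finset.abs_sum_le_sum_abs _ _).trans ?_
  refine Finset.sum_le_sum fun k _ => ?_
  rw [abs_mul, abs_mul]
  calc |y j| * |M j k| * |y k| ≤ 1 * |M j k| * 1 := by
        apply mul_le_mul (mul_le_mul (abs_coord_le y hy j) le_rfl (abs_nonneg _) zero_le_one)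
          (abs_coord_le y hy k) (abs_nonneg _) (by positivity)
    _ = |M j k| := by ring

lemma srad_le {n : ℕ} (M : Matrix (Fin n) (Fin n) ℝ) :
    srad M ≤ ∑ j, ∑ k, |M j k| := by
  refine Real.iSup_le (fun y => quad_bound M y (by simpa using mem_sphere_zero_iff_norm.mp y.2)) ?_
  positivity

lemma abs_lam_le_beta {m n : ℕ} {A : (Fin (m+2) → Fin n) → ℝ}
    {lam : ℝ} {x : En n} (hx : ‖x‖ = 1) (heig : tvec A x = lam • x) :
    |lam| ≤ beta A := by
  have hxs : x ∈ sphere (0 : En n) 1 := by simpa using mem_sphere_zero_iff_norm.mpr hx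
  have hsum : ∑ j, x j * x j = 1 := by
    have h := real_inner_self_eq_norm_sq x
    rw [hx, PiLp.inner_apply] at h
    simpa only [RCLike.inner_apply, conj_trivial, one_pow] using h
  have hquad : quadForm (tmat A x) x = lam := by
    unfold quadForm
    calc ∑ j, ∑ k, x j * tmat A x j k * x k
        = ∑ j, x j * ∑ k, tmat A x j k * x k := by
          refine Finset.sum_congr rfl fun j _ => ?_
          rw [Finset.mul_sum]; refine Finset.sum_congr rfl fun k _ => by ring
      _ = ∑ j, x j * (lam * x j) := by
          refine Finset.sum_congr rfl fun j _ => ?_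
          rw [← tvec_apply, heig]
          rfl
      _ = lam * ∑ j, x j * x j := by rw [Finset.mul_sum]; exact Finset.sum_congr rfl fun j _ => by ring
      _ = lam := by rw [hsum, mul_one]
  have h1 : |lam| ≤ srad (tmat A x) := by
    rw [← hquad]
    refine le_ciSup (f := fun y : sphere (0:En n) 1 => |quadForm (tmat A x) (y : En n)|)
      ⟨∑ j, ∑ k, |tmat A x j k|, ?_⟩ (⟨x, hxs⟩ : sphere (0:En n) 1)
    rintro _ ⟨y, rfl⟩
    exact quad_bound _ _ (by simpa using mem_sphere_zero_iff_norm.mp y.2)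
  set C : ℝ := ∑ j, ∑ k, ∑ i : Fin m → Fin n, |A (Fin.cons j (Fin.cons k i))| with hC
  have hsradC : ∀ z : En n, ‖z‖ = 1 → srad (tmat A z) ≤ C := by
    intro z hz
    refine (srad_le _).trans ?_
    refine Finset.sum_le_sum fun j _ => Finset.sum_le_sum fun k _ => ?_
    refine (Finset.abs_sum_le_sum_abs _ _).trans ?_
    refine Finset.sum_le_sum fun i _ => ?_
    rw [abs_mul]
    calc |A (Fin.cons j (Fin.cons k i))| * |∏ l, z (i l)|
        ≤ |A (Fin.cons j (Fin.cons k i))| * 1 := by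
          refine mul_le_mul_of_nonneg_left ?_ (abs_nonneg _)
          rw [Finset.abs_prod]
          exact Finset.prod_le_one (fun l _ => abs_nonneg _) (fun l _ => abs_coord_le z hz _)
      _ = _ := mul_one _
  have h2 : srad (tmat A x) ≤ ⨆ z : sphere (0:En n) 1, srad (tmat A (z : En n)) := by
    refine le_ciSup (f := fun z : sphere (0:En n) 1 => srad (tmat A (z : En n))) ⟨C, ?_⟩
      (⟨x, hxs⟩ : sphere (0:En n) 1)
    rintro _ ⟨z, rfl⟩
    exact hsradC _ (by simpa using mem_sphere_zero_iff_norm.mp z.2)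
  have hS0 : (0:ℝ) ≤ ⨆ z : sphere (0:En n) 1, srad (tmat A (z : En n)) :=
    le_trans (le_trans (abs_nonneg lam) h1) h2
  have : |lam| ≤ ⨆ z : sphere (0:En n) 1, srad (tmat A (z : En n)) := h1.trans h2
  calc |lam| ≤ ⨆ z : sphere (0:En n) 1, srad (tmat A (z : En n)) := this
    _ = 1 * _ := (one_mul _).symm
    _ ≤ ((m:ℝ)+1) * ⨆ z : sphere (0:En n) 1, srad (tmat A (z : En n)) := by
        have h1m : (1:ℝ) ≤ (m:ℝ) + 1 := by linarith [Nat.cast_nonneg (α:=ℝ) m]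
        exact mul_le_mul_of_nonneg_right h1m hS0
    _ = beta A := rfl

lemma hasFDerivAt_g {m n : ℕ} {A : (Fin (m+2) → Fin n) → ℝ} (hA : Symm A) (α : ℝ) (x : En n) :
    HasFDerivAt (fun y : En n => tvec A y + α • y)
      (LinearMap.toContinuousLinearMap (Matrix.toEuclideanLin
        (((m:ℝ)+1) • tmat A x + α • (1 : Matrix (Fin n) (Fin n) ℝ)))) x := by
  set Φ' : Fin n → (En n →L[ℝ] ℝ) := fun j =>
    (∑ i : Fin (m+1) → Fin n, A (Fin.cons j i) •
       ∑ k, (∏ l ∈ Finset.univ.erase k, x (i l)) • (EuclideanSpace.proj (i k) : En n →L[ℝ] ℝ))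
      + α • (EuclideanSpace.proj j : En n →L[ℝ] ℝ) with hΦ'
  have hcomp : ∀ j : Fin n, HasFDerivAt
      (fun y : En n => (∑ i : Fin (m+1) → Fin n, A (Fin.cons j i) * ∏ k, y (i k)) + α * y j)
      (Φ' j) x := by
    intro j
    refine HasFDerivAt.add ?_ ?_
    · refine HasFDerivAt.fun_sum fun i _ => ?_
      have hb : ∀ c : Fin n, HasFDerivAt (fun y : En n => y c)
          (EuclideanSpace.proj c : En n →L[ℝ] ℝ) x :=
        fun c => (EuclideanSpace.proj c : En n →L[ℝ] ℝ).hasFDerivAt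
      have hp : HasFDerivAt (fun y : En n => ∏ k, y (i k))
          (∑ k, (∏ l ∈ Finset.univ.erase k, x (i l)) •
            (EuclideanSpace.proj (i k) : En n →L[ℝ] ℝ)) x :=
        HasFDerivAt.finset_prod (fun k _ => hb (i k))
      exact hp.const_mul _
    · have hb : HasFDerivAt (fun y : En n => y j)
          (EuclideanSpace.proj j : En n →L[ℝ] ℝ) x :=
        (EuclideanSpace.proj j : En n →L[ℝ] ℝ).hasFDerivAt
      exact hb.const_mul α
  have hPi : HasFDerivAt
      (fun y : En n => (fun j => (∑ i : Fin (m+1) → Fin n, A (Fin.cons j i) * ∏ k, y (i k))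
        + α * y j : Fin n → ℝ))
      (ContinuousLinearMap.pi Φ') x := hasFDerivAt_pi.2 hcomp
  have hg0 := (((EuclideanSpace.equiv (Fin n) ℝ).symm :
      (Fin n → ℝ) →L[ℝ] En n).hasFDerivAt).comp x hPi
  have hCLM : ((EuclideanSpace.equiv (Fin n) ℝ).symm :
      (Fin n → ℝ) →L[ℝ] En n).comp (ContinuousLinearMap.pi Φ')
      = LinearMap.toContinuousLinearMap (Matrix.toEuclideanLin
        (((m:ℝ)+1) • tmat A x + α • (1 : Matrix (Fin n) (Fin n) ℝ))) := by
    refine ContinuousLinearMap.ext fun v => ?_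
    ext j
    show Φ' j v = _
    have hL : Φ' j v = ((m:ℝ)+1) * (∑ c, tmat A x j c * v c) + α * v j := by
      rw [hΦ']
      simp only [ContinuousLinearMap.add_apply, ContinuousLinearMap.sum_apply,
        ContinuousLinearMap.smul_apply, PiLp.proj_apply, smul_eq_mul]
      congr 1
      calc ∑ i : Fin (m+1) → Fin n, A (Fin.cons j i)
              * ∑ k, (∏ l ∈ Finset.univ.erase k, x (i l)) * v (i k)
          = ∑ k : Fin (m+1), ∑ i : Fin (m+1) → Fin n, A (Fin.cons j i)
              * ((∏ l ∈ Finset.univ.erase k, x (i l)) * v (i k)) := by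
            rw [Finset.sum_comm]
            exact Finset.sum_congr rfl fun i _ => by rw [Finset.mul_sum]
        _ = ∑ k : Fin (m+1), ∑ c, tmat A x j c * v c :=
            Finset.sum_congr rfl fun k _ => deriv_term hA x v j k
        _ = ((m:ℝ)+1) * ∑ c, tmat A x j c * v c := by
            rw [Finset.sum_const, Finset.card_univ, Fintype.card_fin, nsmul_eq_mul]
            push_cast
            ring
    rw [hL]
    show _ = Matrix.toEuclideanLin _ v j
    rw [Matrix.toEuclideanLin_apply, PiLp.toLp_apply]
    simp only [Matrix.mulVec, dotProduct, Matrix.add_apply, Matrix.smul_apply,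
      Matrix.one_apply, smul_eq_mul, mul_ite, mul_one, mul_zero, add_mul, ite_mul, zero_mul]
    rw [Finset.sum_add_distrib, Finset.mul_sum, Finset.sum_ite_eq (Finset.univ) j (fun c => α * v c)]
    simp only [Finset.mem_univ, if_true]
    congr 1
    simp only [one_mul, Finset.sum_add_distrib, mul_assoc]
  rw [hCLM] at hg0
  refine hg0.congr_of_eventuallyEq (Filter.Eventually.of_forall fun y => ?_)
  ext j
  simp [tvec]

lemma hasFDerivAt_normalize {n : ℕ} (x : En n) (hx : ‖x‖ = 1) (c : ℝ) (hc : 0 < c) :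
    HasFDerivAt (fun y : En n => ‖y‖⁻¹ • y)
      (c⁻¹ • (ContinuousLinearMap.id ℝ (En n)
        - (innerSL ℝ x).smulRight x)) (c • x) := by
  have hz2 : ⟪c • x, c • x⟫ = c^2 := by
    rw [real_inner_smul_left, real_inner_smul_right, real_inner_self_eq_norm_sq, hx]
    ring
  have h1 : HasFDerivAt (fun y : En n => ⟪y, y⟫)
      ((fderivInnerCLM ℝ (c • x, c • x)).comp
        ((ContinuousLinearMap.id ℝ (En n)).prod (ContinuousLinearMap.id ℝ (En n)))) (c • x) :=
    (hasFDerivAt_id (c • x)).inner ℝ (hasFDerivAt_id (c • x))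
  have h2 : HasDerivAt (fun t : ℝ => (Real.sqrt t)⁻¹)
      (-(1 / (2 * Real.sqrt (c^2))) / (Real.sqrt (c^2))^2) (c^2) :=
    (Real.hasDerivAt_sqrt (by positivity)).inv (by positivity)
  have h2' : HasDerivAt (fun t : ℝ => (Real.sqrt t)⁻¹)
      (-(1 / (2 * Real.sqrt (c^2))) / (Real.sqrt (c^2))^2)
      ((fun y : En n => ⟪y, y⟫) (c • x)) := by
    show HasDerivAt _ _ (⟪c • x, c • x⟫)
    rw [hz2]
    exact h2
  have h3 : HasFDerivAt (fun y : En n => (Real.sqrt ⟪y, y⟫)⁻¹)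
      ((-(1 / (2 * Real.sqrt (c^2))) / (Real.sqrt (c^2))^2) •
        ((fderivInnerCLM ℝ (c • x, c • x)).comp
          ((ContinuousLinearMap.id ℝ (En n)).prod (ContinuousLinearMap.id ℝ (En n)))))
      (c • x) := h2.comp_hasFDerivAt_of_eq (c • x) h1 hz2.symm
  have h4 := h3.smul (hasFDerivAt_id (c • x))
  have hfun : (fun y : En n => ‖y‖⁻¹ • y)
      = (fun y : En n => (Real.sqrt ⟪y, y⟫)⁻¹ • y) := by
    funext y
    rw [real_inner_self_eq_norm_sq, Real.sqrt_sq (norm_nonneg y)]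
  rw [hfun]
  refine h4.congr_fderiv (Eq.symm ?_)
  refine ContinuousLinearMap.ext fun v => ?_
  simp only [ContinuousLinearMap.add_apply, ContinuousLinearMap.smul_apply,
    ContinuousLinearMap.smulRight_apply, ContinuousLinearMap.coe_comp',
    Function.comp_apply, ContinuousLinearMap.prod_apply, ContinuousLinearMap.coe_id',
    id_eq, fderivInnerCLM_apply, ContinuousLinearMap.sub_apply, innerSL_apply_apply,
    hz2, Real.sqrt_sq hc.le, smul_eq_mul]
  rw [real_inner_comm v x]
  match_scalars
  · field_simp
  · field_simp
    have e1 : ∑ i, c * x i * v i = c * ∑ i, v i * x i := by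
      rw [Finset.mul_sum]; exact Finset.sum_congr rfl fun i _ => by ring
    have e2 : ∑ i, v i * (c * x i) = c * ∑ i, v i * x i := by
      rw [Finset.mul_sum]; exact Finset.sum_congr rfl fun i _ => by ring
    rw [real_inner_smul_left, real_inner_smul_right, real_inner_comm v x]; ring

lemma toEuclideanLin_matrix_apply {n : ℕ} (N : Matrix (Fin n) (Fin n) ℝ) (v : En n) (j : Fin n) :
    (LinearMap.toContinuousLinearMap (Matrix.toEuclideanLin N)) v j = ∑ c, N j c * v c := by
  show (Matrix.toEuclideanLin N v) j = _
  rw [Matrix.toEuclideanLin_apply, PiLp.toLp_apply]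
  rfl

/-- At an eigenpair (λ,x) with α > β(A), x is a fixed point of the SS-HOPM map φ and
the Jacobian of φ at x is [(m-1)(A x^{m-2} - λxxᵀ) + α(I - xxᵀ)]/(λ+α). -/
theorem stmt15 {m n : ℕ} (A : (Fin (m+2) → Fin n) → ℝ) (hA : Symm A)
    (α : ℝ) (hα : α > beta A)
    (lam : ℝ) (x : En n) (hx : ‖x‖ = 1) (heig : tvec A x = lam • x) :
    (fun y : En n => ‖tvec A y + α • y‖⁻¹ • (tvec A y + α • y)) x = x ∧
    fderiv ℝ (fun y : En n => ‖tvec A y + α • y‖⁻¹ • (tvec A y + α • y)) x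
      = LinearMap.toContinuousLinearMap (Matrix.toEuclideanLin
          ((lam + α)⁻¹ • (((m : ℝ) + 1) • (tmat A x - lam • Matrix.vecMulVec x x)
            + α • ((1 : Matrix (Fin n) (Fin n) ℝ) - Matrix.vecMulVec x x)))) := by
  have hlb := abs_lam_le_beta hx heig
  have hc : 0 < lam + α := by
    have h1 : |lam| < α := lt_of_le_of_lt hlb hα
    have h2 := abs_lt.mp h1
    linarith [h2.1]
  have hgx : tvec A x + α • x = (lam + α) • x := by rw [heig, add_smul]
  have hfix : ‖tvec A x + α • x‖⁻¹ • (tvec A x + α • x) = x := by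
    rw [hgx, norm_smul, hx, Real.norm_eq_abs, abs_of_pos hc, mul_one, smul_smul,
      inv_mul_cancel₀ hc.ne', one_smul]
  refine ⟨hfix, ?_⟩
  set N : Matrix (Fin n) (Fin n) ℝ := ((m:ℝ)+1) • tmat A x + α • 1 with hNdef
  have hg : HasFDerivAt (fun y : En n => tvec A y + α • y)
      (LinearMap.toContinuousLinearMap (Matrix.toEuclideanLin N)) x := hasFDerivAt_g hA α x
  have hN := hasFDerivAt_normalize x hx (lam + α) hc
  have hgx' : (fun y : En n => tvec A y + α • y) x = (lam + α) • x := hgx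
  have hφ : HasFDerivAt (fun y : En n => ‖tvec A y + α • y‖⁻¹ • (tvec A y + α • y))
      (((lam + α)⁻¹ • (ContinuousLinearMap.id ℝ (En n)
          - (innerSL ℝ x).smulRight x)).comp
        (LinearMap.toContinuousLinearMap (Matrix.toEuclideanLin N))) x :=
    by rw [← hgx'] at hN; exact hN.comp x hg
  rw [hφ.fderiv]
  set K : ℝ := ((m:ℝ)+1) * lam + α with hK
  have hT : ((lam + α)⁻¹ • (((m : ℝ) + 1) • (tmat A x - lam • Matrix.vecMulVec x x)
      + α • ((1 : Matrix (Fin n) (Fin n) ℝ) - Matrix.vecMulVec x x)))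
      = (lam + α)⁻¹ • (N - K • Matrix.vecMulVec x x) := by
    ext j c
    simp only [Matrix.smul_apply, Matrix.add_apply, Matrix.sub_apply, Matrix.one_apply,
      Matrix.vecMulVec_apply, smul_eq_mul, hNdef, hK]
    ring
  rw [hT]
  refine ContinuousLinearMap.ext fun v => ?_
  ext j
  -- compute the inner product ⟪x, Dg v⟫
  have hwj : ∀ j', (LinearMap.toContinuousLinearMap (Matrix.toEuclideanLin N)) v j'
      = ((m:ℝ)+1) * (∑ c, tmat A x j' c * v c) + α * v j' := by
    intro j'
    rw [toEuclideanLin_matrix_apply]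
    simp only [hNdef, Matrix.add_apply, Matrix.smul_apply, Matrix.one_apply, smul_eq_mul,
      mul_ite, mul_one, mul_zero, add_mul, ite_mul, zero_mul]
    rw [Finset.sum_add_distrib, Finset.mul_sum,
      Finset.sum_ite_eq Finset.univ j' (fun c => α * v c)]
    simp only [Finset.mem_univ, if_true]
    congr 1
    simp only [one_mul, Finset.sum_add_distrib, mul_assoc]
  have hxw : ∑ i, x i * ((LinearMap.toContinuousLinearMap (Matrix.toEuclideanLin N)) v i)
      = K * ∑ c, x c * v c := by
    calc ∑ i, x i * ((LinearMap.toContinuousLinearMap (Matrix.toEuclideanLin N)) v i)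
        = ∑ i, (((m:ℝ)+1) * (x i * ∑ c, tmat A x i c * v c) + α * (x i * v i)) := by
          refine Finset.sum_congr rfl fun i _ => ?_
          rw [hwj i]; ring
      _ = ((m:ℝ)+1) * (∑ i, x i * ∑ c, tmat A x i c * v c) + α * ∑ i, x i * v i := by
          rw [Finset.sum_add_distrib, Finset.mul_sum, Finset.mul_sum]
      _ = ((m:ℝ)+1) * (lam * ∑ c, x c * v c) + α * ∑ c, x c * v c := by
          congr 1
          · congr 1
            calc ∑ i, x i * ∑ c, tmat A x i c * v c
                = ∑ i, ∑ c, x i * (tmat A x i c * v c) :=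
                  Finset.sum_congr rfl fun i _ => Finset.mul_sum _ _ _
              _ = ∑ c, ∑ i, x i * (tmat A x i c * v c) := Finset.sum_comm
              _ = ∑ c, (∑ i, x i * tmat A x i c) * v c := by
                  refine Finset.sum_congr rfl fun c _ => ?_
                  rw [Finset.sum_mul]
                  refine Finset.sum_congr rfl fun i _ => by ring
              _ = ∑ c, lam * (x c * v c) := by
                  refine Finset.sum_congr rfl fun c _ => ?_
                  rw [vecMul_tmat hA x c, heig]
                  show lam • x c * v c = _
                  simp [smul_eq_mul]; ring
              _ = lam * ∑ c, x c * v c := by rw [Finset.mul_sum]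
      _ = K * ∑ c, x c * v c := by rw [hK]; ring
  -- now compute both sides at coordinate j
  simp only [ContinuousLinearMap.coe_comp', Function.comp_apply,
    ContinuousLinearMap.smul_apply, ContinuousLinearMap.sub_apply,
    ContinuousLinearMap.coe_id', id_eq, ContinuousLinearMap.smulRight_apply, innerSL_apply_apply]
  have hip : (inner ℝ x ((LinearMap.toContinuousLinearMap (Matrix.toEuclideanLin N)) v) : ℝ)
      = K * ∑ c, x c * v c := by
    rw [PiLp.inner_apply]
    simp only [RCLike.inner_apply, conj_trivial]
    rw [← hxw]; exact Finset.sum_congr rfl fun i _ => mul_comm _ _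
  rw [hip]
  show (lam + α)⁻¹ * ((LinearMap.toContinuousLinearMap (Matrix.toEuclideanLin N)) v j
      - (K * ∑ c, x c * v c) * x j) = _
  rw [toEuclideanLin_matrix_apply, toEuclideanLin_matrix_apply]
  calc (lam + α)⁻¹ * ((∑ c, N j c * v c) - (K * ∑ c, x c * v c) * x j)
      = ∑ c, ((lam + α)⁻¹ * (N j c * v c) - (lam + α)⁻¹ * (K * (x j * x c) * v c)) := by
        rw [Finset.sum_sub_distrib, ← Finset.mul_sum, ← Finset.mul_sum, ← mul_sub]
        congr 2
        rw [Finset.mul_sum, Finset.sum_mul]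
        exact Finset.sum_congr rfl fun c _ => by ring
    _ = ∑ c, ((lam + α)⁻¹ • (N - K • Matrix.vecMulVec x x)) j c * v c := by
        refine Finset.sum_congr rfl fun c _ => ?_
        simp only [Matrix.smul_apply, Matrix.sub_apply, Matrix.vecMulVec_apply, smul_eq_mul]
        ring
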